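/- arXiv:2411.01731 — 5 statements merged into one kernel-verified Lean document; each statement's English description precedes it below -/
import Mathlib

section
/- Let b : R^d → R^d satisfy |b(x) − b(y)| ≤ L₀(1 + |x|^ℓ + |y|^ℓ)|x − y| for all x, y. Then the tamed drift b^(δ)(x) = b(x)/(1 + δ^γ |x|^ℓ) satisfies |b^(δ)(x) − b(x)| ≤ 3 max(L₀, |b(0)|)(1 + |x|^{1+2ℓ}) δ^γ for all x ∈ R^d and δ ∈ (0,1]. -/
lemma gbound_aux (ℓ r : ℝ) (hℓ : 0 ≤ ℓ) (hr : 0 ≤ r) :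
    r ^ ℓ * (1 + (1 + r ^ ℓ + (0:ℝ) ^ ℓ) * r) ≤ 3 * (1 + r ^ (1 + 2 * ℓ)) := by
  rcases eq_or_lt_of_le hℓ with h0 | hpos
  · subst h0
    norm_num [Real.rpow_zero, Real.rpow_one]
    nlinarith [hr]
  · have hz : (0:ℝ) ^ ℓ = 0 := Real.zero_rpow hpos.ne'
    rw [hz]
    rcases eq_or_lt_of_le hr with h0r | hrpos
    · rw [← h0r]
      rw [Real.zero_rpow hpos.ne', Real.zero_rpow (by linarith : (1 + 2*ℓ) ≠ 0)]
      norm_num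
    · have hsplit : r ^ (1 + 2 * ℓ) = r * (r ^ ℓ * r ^ ℓ) := by
        rw [show (1 + 2 * ℓ) = 1 + (ℓ + ℓ) by ring, Real.rpow_add hrpos,
          Real.rpow_add hrpos, Real.rpow_one]
      set s := r ^ ℓ with hs
      have hs0 : 0 ≤ s := Real.rpow_nonneg hr ℓ
      rcases le_total r 1 with h1 | h1
      · have hs1 : s ≤ 1 := Real.rpow_le_one hr h1 hℓ
        rw [hsplit]
        nlinarith [mul_nonneg hs0 hr, mul_nonneg (mul_nonneg hs0 hs0) hr]
      · have hs1 : 1 ≤ s := Real.one_le_rpow h1 hℓ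
        rw [hsplit]
        nlinarith [mul_nonneg hs0 hr, mul_nonneg (mul_nonneg hs0 hs0) hr]

/-- Taming error bound for the tamed drift `b^(δ)(x) = b(x)/(1 + δ^γ |x|^ℓ)`. -/
theorem stmt_2 (d : ℕ) (L₀ ℓ γ : ℝ) (hL : 0 < L₀) (hℓ : 0 ≤ ℓ)
    (hγ : γ ∈ Set.Ioo (0 : ℝ) (1 / 2))
    (b : EuclideanSpace ℝ (Fin d) → EuclideanSpace ℝ (Fin d))
    (hb : ∀ x y, ‖b x - b y‖ ≤ L₀ * (1 + ‖x‖ ^ ℓ + ‖y‖ ^ ℓ) * ‖x - y‖)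
    (δ : ℝ) (hδ : δ ∈ Set.Ioc (0 : ℝ) 1) (x : EuclideanSpace ℝ (Fin d)) :
    ‖(1 + δ ^ γ * ‖x‖ ^ ℓ)⁻¹ • b x - b x‖
      ≤ 3 * max L₀ ‖b 0‖ * (1 + ‖x‖ ^ (1 + 2 * ℓ)) * δ ^ γ := by
  obtain ⟨hδ0, hδ1⟩ := hδ
  set M := max L₀ ‖b 0‖ with hMdef
  have hM : 0 < M := lt_of_lt_of_le hL (le_max_left _ _)
  set r := ‖x‖ with hrdef
  have hr : 0 ≤ r := norm_nonneg x
  have hδγ : 0 ≤ δ ^ γ := Real.rpow_nonneg hδ0.le γ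
  set c := δ ^ γ * r ^ ℓ with hc
  have hc0 : 0 ≤ c := mul_nonneg hδγ (Real.rpow_nonneg hr ℓ)
  have h1c : (0:ℝ) < 1 + c := by linarith
  have heq : ‖(1 + c)⁻¹ • b x - b x‖ = (1 - (1 + c)⁻¹) * ‖b x‖ := by
    have h2 : (1 + c)⁻¹ • b x - b x = ((1 + c)⁻¹ - 1) • b x := by
      rw [sub_smul, one_smul]
    rw [h2, norm_smul, Real.norm_eq_abs,
      abs_of_nonpos (sub_nonpos.mpr (inv_le_one_of_one_le₀ (by linarith))), neg_sub]
  have hfrac : 1 - (1 + c)⁻¹ ≤ c := by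
    have he : 1 - (1 + c)⁻¹ = c / (1 + c) := by field_simp; ring
    rw [he]
    exact div_le_self hc0 (by linarith)
  have hbx : ‖b x‖ ≤ M * (1 + (1 + r ^ ℓ + (0:ℝ) ^ ℓ) * r) := by
    have h3 := hb x 0
    rw [sub_zero, norm_zero] at h3
    have h4 : ‖b x‖ ≤ ‖b x - b 0‖ + ‖b 0‖ := by
      calc ‖b x‖ = ‖(b x - b 0) + b 0‖ := by rw [sub_add_cancel]
        _ ≤ ‖b x - b 0‖ + ‖b 0‖ := norm_add_le _ _
    have hnn : (0:ℝ) ≤ (1 + r ^ ℓ + (0:ℝ) ^ ℓ) * r := by positivity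
    have hL' : L₀ ≤ M := le_max_left _ _
    have hb0 : ‖b 0‖ ≤ M := le_max_right _ _
    nlinarith [mul_le_mul_of_nonneg_right hL' hnn]
  have hg := gbound_aux ℓ r hℓ hr
  calc ‖(1 + c)⁻¹ • b x - b x‖ = (1 - (1 + c)⁻¹) * ‖b x‖ := heq
    _ ≤ c * ‖b x‖ := mul_le_mul_of_nonneg_right hfrac (norm_nonneg _)
    _ ≤ c * (M * (1 + (1 + r ^ ℓ + (0:ℝ) ^ ℓ) * r)) :=
        mul_le_mul_of_nonneg_left hbx hc0
    _ = δ ^ γ * M * (r ^ ℓ * (1 + (1 + r ^ ℓ + (0:ℝ) ^ ℓ) * r)) := by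
        rw [hc]; ring
    _ ≤ δ ^ γ * M * (3 * (1 + r ^ (1 + 2 * ℓ))) :=
        mul_le_mul_of_nonneg_left hg (by positivity)
    _ = 3 * M * (1 + r ^ (1 + 2 * ℓ)) * δ ^ γ := by ring
end

section
/- Let b : R^d → R^d satisfy |b(x) − b(y)| ≤ L₀(1 + |x|^ℓ + |y|^ℓ)|x − y| for all x, y. Then the drift b̄^(δ)(x) = b(x)/(1 + δ|x|^{2ℓ})^{1/2} satisfies |b̄^(δ)(x) − b(x)| ≤ 2 max(L₀, |b(0)|)(1 + |x|^{1+3ℓ}) δ for all x ∈ R^d and δ ∈ (0,1]. -/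
/-- Taming error bound for the drift `b̄^(δ)(x) = b(x)/(1 + δ|x|^{2ℓ})^{1/2}`. -/
theorem stmt_3 (d : ℕ) (L₀ ℓ : ℝ) (hL : 0 < L₀) (hℓ : 0 ≤ ℓ)
    (b : EuclideanSpace ℝ (Fin d) → EuclideanSpace ℝ (Fin d))
    (hb : ∀ x y, ‖b x - b y‖ ≤ L₀ * (1 + ‖x‖ ^ ℓ + ‖y‖ ^ ℓ) * ‖x - y‖)
    (δ : ℝ) (hδ : δ ∈ Set.Ioc (0 : ℝ) 1) (x : EuclideanSpace ℝ (Fin d)) :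
    ‖(Real.sqrt (1 + δ * ‖x‖ ^ (2 * ℓ)))⁻¹ • b x - b x‖
      ≤ 2 * max L₀ ‖b 0‖ * (1 + ‖x‖ ^ (1 + 3 * ℓ)) * δ := by
  obtain ⟨hδ0, hδ1⟩ := hδ
  set r := ‖x‖ with hr
  have hr0 : 0 ≤ r := norm_nonneg x
  set M := max L₀ ‖b 0‖ with hM
  have hM0 : 0 < M := lt_max_of_lt_left hL
  have hL0M : L₀ ≤ M := le_max_left _ _
  have hb0M : ‖b 0‖ ≤ M := le_max_right _ _
  have hrpow : 0 ≤ r ^ (2 * ℓ) := Real.rpow_nonneg hr0 _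
  have h1 : (1 : ℝ) ≤ 1 + δ * r ^ (2 * ℓ) := by nlinarith
  set s := Real.sqrt (1 + δ * r ^ (2 * ℓ)) with hs
  have hs1 : 1 ≤ s := by
    have h := Real.sqrt_le_sqrt h1
    rwa [Real.sqrt_one] at h
  have hs0 : 0 < s := lt_of_lt_of_le one_pos hs1
  have hsle : s ≤ 1 + δ * r ^ (2 * ℓ) / 2 := by
    rw [hs]
    have h2 : (1 + δ * r ^ (2 * ℓ)) ≤ (1 + δ * r ^ (2 * ℓ) / 2) ^ 2 := by nlinarith
    calc Real.sqrt (1 + δ * r ^ (2 * ℓ)) ≤ Real.sqrt ((1 + δ * r ^ (2 * ℓ) / 2) ^ 2) :=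
          Real.sqrt_le_sqrt h2
      _ = 1 + δ * r ^ (2 * ℓ) / 2 := Real.sqrt_sq (by nlinarith)
  have hsinv : s * s⁻¹ = 1 := mul_inv_cancel₀ hs0.ne'
  have hinv1 : s⁻¹ ≤ 1 := by
    rw [inv_le_one_iff₀]; right; exact hs1
  have hnorm : ‖s⁻¹ • b x - b x‖ = (1 - s⁻¹) * ‖b x‖ := by
    rw [show s⁻¹ • b x - b x = (s⁻¹ - 1) • b x by rw [sub_smul, one_smul], norm_smul,
      Real.norm_eq_abs, abs_of_nonpos (by linarith)]
    ring
  have hfac : 1 - s⁻¹ ≤ δ * r ^ (2 * ℓ) / 2 := by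
    have h3 : 1 - s⁻¹ ≤ s - 1 := by nlinarith
    linarith
  -- key rpow arithmetic
  have hrmul : ∀ a : ℝ, 0 ≤ a → r ^ a * r = r ^ (a + 1) := by
    intro a ha
    rcases eq_or_lt_of_le hr0 with h | h
    · rw [← h, Real.zero_rpow (by intro h'; linarith : a + 1 ≠ 0), mul_zero]
    · rw [Real.rpow_add_one h.ne' a]
  -- bound on ‖b x‖
  have hzℓ : (0:ℝ) ^ ℓ ≤ 1 := by
    rcases eq_or_ne ℓ 0 with rfl | h
    · simp
    · rw [Real.zero_rpow h]; norm_num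
  have hbx : ‖b x‖ ≤ M * (1 + 2 * r + r ^ (1 + ℓ)) := by
    have h4 := hb x 0
    simp only [norm_zero, sub_zero] at h4
    rw [← hr] at h4
    have hrl : 0 ≤ r ^ ℓ := Real.rpow_nonneg hr0 _
    have h5 : ‖b x‖ - ‖b 0‖ ≤ ‖b x - b 0‖ := norm_sub_norm_le (b x) (b 0)
    have h6 : ‖b x‖ ≤ L₀ * (1 + r ^ ℓ + (0:ℝ) ^ ℓ) * r + ‖b 0‖ := by linarith
    have h7 : L₀ * (1 + r ^ ℓ + (0:ℝ) ^ ℓ) * r ≤ L₀ * (2 * r + r ^ ℓ * r) := by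
      have hlr : L₀ * r * (0:ℝ) ^ ℓ ≤ L₀ * r * 1 :=
        mul_le_mul_of_nonneg_left hzℓ (mul_nonneg hL.le hr0)
      nlinarith [hlr]
    rw [hrmul ℓ hℓ, show ℓ + 1 = 1 + ℓ by ring] at h7
    nlinarith [Real.rpow_nonneg hr0 (1 + ℓ)]
  have hbx0 : 0 ≤ ‖b x‖ := norm_nonneg _
  -- polynomial inequality
  have hpoly : r ^ (2 * ℓ) * (1 + 2 * r + r ^ (1 + ℓ)) ≤ 4 * (1 + r ^ (1 + 3 * ℓ)) := by
    rcases le_or_gt r 1 with h | h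
    · have e1 : r ^ (2 * ℓ) ≤ 1 := Real.rpow_le_one hr0 h (by linarith)
      have e2 : r ^ (1 + ℓ) ≤ 1 := Real.rpow_le_one hr0 h (by linarith)
      have e3 : 0 ≤ r ^ (1 + 3 * ℓ) := Real.rpow_nonneg hr0 _
      nlinarith
    · have hr1 : (1:ℝ) ≤ r := h.le
      have hrpos : 0 < r := lt_of_lt_of_le one_pos hr1
      have e1 : r ^ (2 * ℓ) ≤ r ^ (1 + 3 * ℓ) :=
        Real.rpow_le_rpow_of_exponent_le hr1 (by linarith)
      have e2 : r ^ (2 * ℓ) * r ≤ r ^ (1 + 3 * ℓ) := by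
        rw [hrmul (2 * ℓ) (by linarith)]
        exact Real.rpow_le_rpow_of_exponent_le hr1 (by linarith)
      have e3 : r ^ (2 * ℓ) * r ^ (1 + ℓ) = r ^ (1 + 3 * ℓ) := by
        rw [← Real.rpow_add hrpos]; ring_nf
      have e4 : 0 ≤ r ^ (1 + 3 * ℓ) := Real.rpow_nonneg hr0 _
      linarith [e1, e2, e3.le, e4]
  -- combine
  rw [hnorm]
  have step1 : (1 - s⁻¹) * ‖b x‖ ≤ (δ * r ^ (2 * ℓ) / 2) * ‖b x‖ :=
    mul_le_mul_of_nonneg_right hfac hbx0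
  have h8 : r ^ (2 * ℓ) * ‖b x‖ ≤ r ^ (2 * ℓ) * (M * (1 + 2 * r + r ^ (1 + ℓ))) :=
    mul_le_mul_of_nonneg_left hbx hrpow
  have h8' := mul_le_mul_of_nonneg_left h8 (show (0:ℝ) ≤ δ / 2 by linarith)
  have h11 : M * (r ^ (2 * ℓ) * (1 + 2 * r + r ^ (1 + ℓ))) ≤ M * (4 * (1 + r ^ (1 + 3 * ℓ))) :=
    mul_le_mul_of_nonneg_left hpoly hM0.le
  have h12 := mul_le_mul_of_nonneg_left h11 (show (0:ℝ) ≤ δ / 2 by linarith)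
  linarith [step1, h8', h12]
end

section
/- Let b : R^d → R^d satisfy the one-sided Lipschitz bound ⟨x − y, b(x) − b(y)⟩ ≤ −L₂(1 + |x|^ℓ + |y|^ℓ)|x − y|² whenever |x| > R or |y| > R (with L₂ > 0), and the mixed bound ⟨x − y, b(x)|y|^ℓ − b(y)|x|^ℓ⟩ ≤ (L₃(1 + |x|^ℓ + |y|^ℓ) − L₄|x|^ℓ|y|^ℓ)|x − y|² on the same region. Then for all δ ∈ (0, (L₂/(2L₃))^{1/γ} ∧ 1] and all x, y with |x| > R or |y| > R, the tamed drift b^(δ)(x) = b(x)/(1 + δ^γ|x|^ℓ) satisfies ⟨x − y, b^(δ)(x) − b^(δ)(y)⟩ ≤ −(min(L₂/2, L₄))|x − y|². -/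
open scoped RealInnerProductSpace

lemma stmt_5_aux (a X Y L₂ L₃ L₄ I1 I2 n : ℝ) (hX : 0 ≤ X) (hY : 0 ≤ Y)
    (ha0 : 0 < a) (ha1 : a ≤ 1) (haL3 : a * L₃ ≤ L₂ / 2)
    (hL₂ : 0 < L₂) (hL₄ : 0 < L₄) (hn : 0 ≤ n)
    (h1 : I1 ≤ -L₂ * (1 + X + Y) * n)
    (h2 : I2 ≤ (L₃ * (1 + X + Y) - L₄ * X * Y) * n) :
    ((1 + a * X) * (1 + a * Y))⁻¹ * (I1 + a * I2) ≤ -(min (L₂ / 2) L₄) * n := by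
  set m := min (L₂ / 2) L₄ with hm
  have hm1 : m ≤ L₂ / 2 := min_le_left _ _
  have hm2 : m ≤ L₄ := min_le_right _ _
  have hm0 : 0 < m := lt_min (by linarith) hL₄
  have hAB : (0:ℝ) < (1 + a * X) * (1 + a * Y) := by positivity
  rw [inv_mul_le_iff₀ hAB]
  have t1 : m * a * (X + Y) ≤ (L₂ / 2) * (X + Y) := by
    have hma : m * a ≤ L₂ / 2 := by nlinarith
    exact mul_le_mul_of_nonneg_right hma (by positivity)
  have t2 : m * (a * a) * (X * Y) ≤ L₄ * a * (X * Y) := by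
    have : m * (a * a) ≤ L₄ * a := by
      nlinarith [mul_le_mul_of_nonneg_right hm2 (mul_nonneg ha0.le ha0.le),
        mul_le_mul_of_nonneg_left ha1 (mul_nonneg hL₄.le ha0.le)]
    exact mul_le_mul_of_nonneg_right this (mul_nonneg hX hY)
  have t3 : a * (L₃ * (1 + X + Y)) ≤ (L₂ / 2) * (1 + X + Y) := by
    have := mul_le_mul_of_nonneg_right haL3 (by positivity : (0:ℝ) ≤ 1 + X + Y)
    linarith [this]
  have hcoef : m * ((1 + a * X) * (1 + a * Y))
      ≤ L₂ * (1 + X + Y) - a * (L₃ * (1 + X + Y) - L₄ * X * Y) := by nlinarith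
  have h2' : a * I2 ≤ a * ((L₃ * (1 + X + Y) - L₄ * X * Y) * n) :=
    mul_le_mul_of_nonneg_left h2 ha0.le
  have hcn := mul_le_mul_of_nonneg_right hcoef hn
  nlinarith [hcn, h1, h2']

/-- Dissipativity of the tamed drift outside a ball. -/
theorem stmt_5 (d : ℕ) (ℓ γ R L₂ L₃ L₄ : ℝ) (hℓ : 0 ≤ ℓ)
    (hγ : γ ∈ Set.Ioo (0 : ℝ) (1 / 2)) (hR : 0 ≤ R)
    (hL₂ : 0 < L₂) (hL₃ : 0 < L₃) (hL₄ : 0 < L₄)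
    (b : EuclideanSpace ℝ (Fin d) → EuclideanSpace ℝ (Fin d))
    (hdiss : ∀ x y : EuclideanSpace ℝ (Fin d), (R < ‖x‖ ∨ R < ‖y‖) →
      ⟪x - y, b x - b y⟫ ≤ -L₂ * (1 + ‖x‖ ^ ℓ + ‖y‖ ^ ℓ) * ‖x - y‖ ^ 2)
    (hmix : ∀ x y : EuclideanSpace ℝ (Fin d), (R < ‖x‖ ∨ R < ‖y‖) →
      ⟪x - y, ‖y‖ ^ ℓ • b x - ‖x‖ ^ ℓ • b y⟫
        ≤ (L₃ * (1 + ‖x‖ ^ ℓ + ‖y‖ ^ ℓ) - L₄ * ‖x‖ ^ ℓ * ‖y‖ ^ ℓ) * ‖x - y‖ ^ 2)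
    (δ : ℝ) (hδ : δ ∈ Set.Ioc (0 : ℝ) (min ((L₂ / (2 * L₃)) ^ (1 / γ)) 1))
    (x y : EuclideanSpace ℝ (Fin d)) (hxy : R < ‖x‖ ∨ R < ‖y‖) :
    ⟪x - y, (1 + δ ^ γ * ‖x‖ ^ ℓ)⁻¹ • b x - (1 + δ ^ γ * ‖y‖ ^ ℓ)⁻¹ • b y⟫
      ≤ -(min (L₂ / 2) L₄) * ‖x - y‖ ^ 2 := by
  obtain ⟨hγ0, hγ2⟩ := hγ
  obtain ⟨hδ0, hδ1⟩ := hδ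
  have hX : (0:ℝ) ≤ ‖x‖ ^ ℓ := Real.rpow_nonneg (norm_nonneg x) ℓ
  have hY : (0:ℝ) ≤ ‖y‖ ^ ℓ := Real.rpow_nonneg (norm_nonneg y) ℓ
  have ha0 : 0 < δ ^ γ := Real.rpow_pos_of_pos hδ0 γ
  have ha1 : δ ^ γ ≤ 1 :=
    Real.rpow_le_one hδ0.le (le_trans hδ1 (min_le_right _ _)) hγ0.le
  have haL : δ ^ γ ≤ L₂ / (2 * L₃) := by
    have h1 : δ ≤ (L₂ / (2 * L₃)) ^ (1 / γ) := le_trans hδ1 (min_le_left _ _)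
    have hb : (0:ℝ) ≤ L₂ / (2 * L₃) := by positivity
    calc δ ^ γ ≤ ((L₂ / (2 * L₃)) ^ (1 / γ)) ^ γ :=
          Real.rpow_le_rpow hδ0.le h1 hγ0.le
      _ = (L₂ / (2 * L₃)) ^ (1 / γ * γ) := (Real.rpow_mul hb _ _).symm
      _ = L₂ / (2 * L₃) := by
          rw [one_div, inv_mul_cancel₀ (ne_of_gt hγ0), Real.rpow_one]
  have haL3 : δ ^ γ * L₃ ≤ L₂ / 2 := by
    have h := mul_le_mul_of_nonneg_right haL hL₃.le
    have he : L₂ / (2 * L₃) * L₃ = L₂ / 2 := by field_simp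
    linarith [he ▸ h]
  have key : (1 + δ ^ γ * ‖x‖ ^ ℓ)⁻¹ • b x - (1 + δ ^ γ * ‖y‖ ^ ℓ)⁻¹ • b y
      = ((1 + δ ^ γ * ‖x‖ ^ ℓ) * (1 + δ ^ γ * ‖y‖ ^ ℓ))⁻¹ •
        ((b x - b y) + δ ^ γ • (‖y‖ ^ ℓ • b x - ‖x‖ ^ ℓ • b y)) := by
    have hA : (0:ℝ) < 1 + δ ^ γ * ‖x‖ ^ ℓ := by positivity
    have hB : (0:ℝ) < 1 + δ ^ γ * ‖y‖ ^ ℓ := by positivity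
    match_scalars <;> field_simp <;> ring
  rw [key, real_inner_smul_right, inner_add_right, real_inner_smul_right]
  exact stmt_5_aux (δ ^ γ) (‖x‖ ^ ℓ) (‖y‖ ^ ℓ) L₂ L₃ L₄ _ _ _ hX hY ha0 ha1 haL3
    hL₂ hL₄ (by positivity) (hdiss x y hxy) (hmix x y hxy)
end

section
/- Let π^(δ)(x) = ((|x| ∧ φ^{-1}(δ^{-γ}))/|x|) x (π^(δ)(0)=0) with φ(r) = 1 + r^ℓ, γ ∈ (0,1/2), ℓ > 0, and α > 0. Then for all x ∈ R^d and δ ∈ (0,1], |π^(δ)(x) − x| ≤ 2^{max(1, α/γ)} (1 + |x|^{1 + ℓα/γ}) δ^α. -/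
private lemma one_add_rpow_le (t p : ℝ) (ht : 0 ≤ t) (hp : 0 < p) :
    (1 + t) ^ p ≤ 2 ^ max 0 (p - 1) * (1 + t ^ p) := by
  lift t to NNReal using ht
  rcases le_or_gt p 1 with h1 | h1
  · rw [max_eq_left (by linarith), Real.rpow_zero, one_mul]
    have h := NNReal.rpow_add_le_add_rpow 1 t hp.le h1
    have h2 : ((1 + t : NNReal) : ℝ) ^ p ≤ (((1 : NNReal) ^ p + t ^ p : NNReal) : ℝ) := by
      rw [← NNReal.coe_rpow]
      exact_mod_cast h
    simpa [NNReal.coe_rpow, NNReal.one_rpow] using h2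
  · rw [max_eq_right (by linarith)]
    have h := NNReal.rpow_add_le_mul_rpow_add_rpow 1 t h1.le
    have h2 : ((1 + t : NNReal) : ℝ) ^ p ≤
        (((2 : NNReal) ^ (p - 1) * ((1 : NNReal) ^ p + t ^ p) : NNReal) : ℝ) := by
      rw [← NNReal.coe_rpow]
      exact_mod_cast h
    calc (1 + (t : ℝ)) ^ p ≤ (2 : ℝ) ^ (p - 1) * (1 + (t : ℝ) ^ p) := by
          simpa [NNReal.coe_rpow, NNReal.coe_mul, NNReal.one_rpow] using h2
      _ ≤ 2 ^ (p - 1) * (1 + (t : ℝ) ^ p) := le_rfl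

/-- Closeness of the truncation map `π^(δ)` to the identity. -/
theorem stmt_15 (d : ℕ) (ℓ γ α : ℝ) (hℓ : 0 < ℓ)
    (hγ : γ ∈ Set.Ioo (0 : ℝ) (1 / 2)) (hα : 0 < α)
    (δ : ℝ) (hδ : δ ∈ Set.Ioc (0 : ℝ) 1)
    (π : EuclideanSpace ℝ (Fin d) → EuclideanSpace ℝ (Fin d))
    (hπ0 : π 0 = 0)
    (hπ : ∀ x : EuclideanSpace ℝ (Fin d), x ≠ 0 →
      π x = (min ‖x‖ ((δ ^ (-γ) - 1) ^ (1 / ℓ)) / ‖x‖) • x)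
    (x : EuclideanSpace ℝ (Fin d)) :
    ‖π x - x‖ ≤ 2 ^ max (1 : ℝ) (α / γ) * (1 + ‖x‖ ^ (1 + ℓ * α / γ)) * δ ^ α := by
  obtain ⟨hγ0, hγ2⟩ := hγ
  obtain ⟨hδ0, hδ1⟩ := hδ
  have hRHS_pos : 0 < 2 ^ max (1 : ℝ) (α / γ) * (1 + ‖x‖ ^ (1 + ℓ * α / γ)) * δ ^ α := by
    have h1 : (0:ℝ) < 2 ^ max (1 : ℝ) (α / γ) := Real.rpow_pos_of_pos two_pos _
    have h2 : (0:ℝ) < 1 + ‖x‖ ^ (1 + ℓ * α / γ) := by positivity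
    have h3 : (0:ℝ) < δ ^ α := Real.rpow_pos_of_pos hδ0 _
    positivity
  by_cases hx : x = 0
  · have h0 : π x - x = 0 := by rw [hx, hπ0, sub_zero]
    rw [h0, norm_zero]
    exact hRHS_pos.le
  · rw [hπ x hx]
    set R := (δ ^ (-γ) - 1) ^ (1 / ℓ) with hRdef
    have hxn : 0 < ‖x‖ := norm_pos_iff.mpr hx
    have hδγ : (1 : ℝ) ≤ δ ^ (-γ) := by
      rw [← Real.rpow_zero δ]
      exact Real.rpow_le_rpow_of_exponent_ge hδ0 hδ1 (by linarith)
    have hR0 : 0 ≤ R := Real.rpow_nonneg (by linarith) _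
    rcases le_or_gt ‖x‖ R with hle | hlt
    · rw [min_eq_left hle, div_self hxn.ne', one_smul, sub_self, norm_zero]
      exact hRHS_pos.le
    · rw [min_eq_right hlt.le]
      have key : ‖(R / ‖x‖) • x - x‖ = ‖x‖ - R := by
        rw [show (R / ‖x‖) • x - x = (R / ‖x‖ - 1) • x by rw [sub_smul, one_smul],
          norm_smul, Real.norm_eq_abs,
          abs_of_nonpos (by rw [sub_nonpos, div_le_one hxn]; exact hlt.le)]
        field_simp
        ring
      rw [key]
      have hxl : δ ^ (-γ) ≤ 1 + ‖x‖ ^ ℓ := by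
        have h : R ^ ℓ < ‖x‖ ^ ℓ := Real.rpow_lt_rpow hR0 hlt hℓ
        rw [hRdef, ← Real.rpow_mul (by linarith), one_div,
          inv_mul_cancel₀ hℓ.ne', Real.rpow_one] at h
        linarith
      have hpow1 : (1 : ℝ) ≤ δ ^ α * (1 + ‖x‖ ^ ℓ) ^ (α / γ) := by
        have h1 : δ ^ (-α) ≤ (1 + ‖x‖ ^ ℓ) ^ (α / γ) := by
          calc δ ^ (-α) = (δ ^ (-γ)) ^ (α / γ) := by
                rw [← Real.rpow_mul hδ0.le]
                congr 1
                field_simp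
              _ ≤ (1 + ‖x‖ ^ ℓ) ^ (α / γ) :=
                Real.rpow_le_rpow (Real.rpow_nonneg hδ0.le _) hxl
                  (div_nonneg hα.le hγ0.le)
        calc (1 : ℝ) = δ ^ α * δ ^ (-α) := by
              rw [← Real.rpow_add hδ0]; simp
          _ ≤ δ ^ α * (1 + ‖x‖ ^ ℓ) ^ (α / γ) :=
              mul_le_mul_of_nonneg_left h1 (Real.rpow_pos_of_pos hδ0 _).le
      have hxnorm_le : ‖x‖ ≤ 1 + ‖x‖ ^ (1 + ℓ * α / γ) := by
        have hq : (1:ℝ) ≤ 1 + ℓ * α / γ := by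
          have := (div_pos (mul_pos hℓ hα) hγ0).le
          linarith
        rcases le_or_gt ‖x‖ 1 with h | h
        · have : (0:ℝ) ≤ ‖x‖ ^ (1 + ℓ * α / γ) := Real.rpow_nonneg hxn.le _
          linarith
        · calc ‖x‖ = ‖x‖ ^ (1:ℝ) := (Real.rpow_one _).symm
            _ ≤ ‖x‖ ^ (1 + ℓ * α / γ) :=
              Real.rpow_le_rpow_of_exponent_le h.le hq
            _ ≤ 1 + ‖x‖ ^ (1 + ℓ * α / γ) := by linarith
      have hsplit : ‖x‖ * ‖x‖ ^ (ℓ * α / γ) = ‖x‖ ^ (1 + ℓ * α / γ) := by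
        rw [Real.rpow_add hxn, Real.rpow_one]
      calc ‖x‖ - R ≤ ‖x‖ := by linarith
        _ ≤ ‖x‖ * (δ ^ α * (1 + ‖x‖ ^ ℓ) ^ (α / γ)) :=
            le_mul_of_one_le_right hxn.le hpow1
        _ = (1 + ‖x‖ ^ ℓ) ^ (α / γ) * ‖x‖ * δ ^ α := by ring
        _ ≤ 2 ^ max 0 (α / γ - 1) * (1 + ‖x‖ ^ (ℓ * α / γ)) * ‖x‖ * δ ^ α := by
            have h1 := one_add_rpow_le (‖x‖ ^ ℓ) (α / γ)
              (Real.rpow_nonneg hxn.le _) (div_pos hα hγ0)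
            rw [show (‖x‖ ^ ℓ) ^ (α / γ) = ‖x‖ ^ (ℓ * α / γ) from ?_] at h1
            · exact mul_le_mul_of_nonneg_right
                (mul_le_mul_of_nonneg_right h1 hxn.le)
                (Real.rpow_pos_of_pos hδ0 _).le
            · rw [← Real.rpow_mul hxn.le, mul_div_assoc]
        _ = 2 ^ max 0 (α / γ - 1) * (‖x‖ + ‖x‖ ^ (1 + ℓ * α / γ)) * δ ^ α := by
            rw [← hsplit]; ring
        _ ≤ 2 ^ max 0 (α / γ - 1) * (2 * (1 + ‖x‖ ^ (1 + ℓ * α / γ))) * δ ^ α := by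
            apply mul_le_mul_of_nonneg_right _ (Real.rpow_pos_of_pos hδ0 _).le
            apply mul_le_mul_of_nonneg_left _ (Real.rpow_pos_of_pos two_pos _).le
            have : (0:ℝ) ≤ ‖x‖ ^ (1 + ℓ * α / γ) := Real.rpow_nonneg hxn.le _
            linarith
        _ = 2 ^ max (1:ℝ) (α / γ) * (1 + ‖x‖ ^ (1 + ℓ * α / γ)) * δ ^ α := by
            have h2 : (2:ℝ) ^ max 0 (α / γ - 1) * 2 = 2 ^ max (1:ℝ) (α / γ) := by
              nth_rewrite 2 [show (2:ℝ) = (2:ℝ) ^ (1:ℝ) by rw [Real.rpow_one]]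
              rw [← Real.rpow_add two_pos]
              congr 1
              rcases le_or_gt (α / γ) 1 with h | h
              · rw [max_eq_left (by linarith), max_eq_left h]; ring
              · rw [max_eq_right (by linarith), max_eq_right h.le]; ring
            rw [← h2]; ring
end

section
/- Let L₂, L₀ > 0, ℓ ≥ 0 and δ ∈ (0, L₂²/(32 L₀⁴)]. Then for all x ∈ R^d with |x| ≥ 1: L₂(1 + δ|x|^{2ℓ})^{1/2} − 2L₀²(1 + |x|^ℓ)δ ≥ L₂/√2 + (L₂/(2√2) − 2L₀²√δ)(1 + |x|^ℓ)√δ > 0. -/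
/-- Key positivity estimate in the uniform moment bound for the tamed scheme. -/
theorem stmt_18 (d : ℕ) (L₂ L₀ ℓ δ : ℝ) (hL₂ : 0 < L₂) (hL₀ : 0 < L₀)
    (hℓ : 0 ≤ ℓ) (hδ : δ ∈ Set.Ioc (0 : ℝ) (L₂ ^ 2 / (32 * L₀ ^ 4)))
    (x : EuclideanSpace ℝ (Fin d)) (hx : 1 ≤ ‖x‖) :
    L₂ / Real.sqrt 2
        + (L₂ / (2 * Real.sqrt 2) - 2 * L₀ ^ 2 * Real.sqrt δ)
          * (1 + ‖x‖ ^ ℓ) * Real.sqrt δ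
      ≤ L₂ * Real.sqrt (1 + δ * ‖x‖ ^ (2 * ℓ)) - 2 * L₀ ^ 2 * (1 + ‖x‖ ^ ℓ) * δ ∧
    0 < L₂ / Real.sqrt 2
        + (L₂ / (2 * Real.sqrt 2) - 2 * L₀ ^ 2 * Real.sqrt δ)
          * (1 + ‖x‖ ^ ℓ) * Real.sqrt δ := by
  obtain ⟨hδ0, hδ1⟩ := hδ
  have hr1 : (1:ℝ) ≤ ‖x‖ := hx
  have hr0 : (0:ℝ) < ‖x‖ := lt_of_lt_of_le one_pos hr1
  have hrl : (1:ℝ) ≤ ‖x‖ ^ ℓ := Real.one_le_rpow hr1 hℓ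
  set s := Real.sqrt δ with hs
  have hs0 : 0 < s := Real.sqrt_pos.mpr hδ0
  have hs2 : s ^ 2 = δ := Real.sq_sqrt hδ0.le
  have h2 : (0:ℝ) < Real.sqrt 2 := Real.sqrt_pos.mpr (by norm_num)
  have h2sq : (Real.sqrt 2) ^ 2 = 2 := Real.sq_sqrt (by norm_num)
  have hkey : ‖x‖ ^ (2*ℓ) = (‖x‖ ^ ℓ) ^ 2 := by
    rw [two_mul, Real.rpow_add hr0, sq]
  set a := s * ‖x‖ ^ ℓ with ha
  have ha0 : 0 < a := by positivity
  have harg : 1 + δ * ‖x‖ ^ (2*ℓ) = 1 + a ^ 2 := by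
    rw [hkey, ha, ← hs2]; ring
  set T := Real.sqrt (1 + δ * ‖x‖ ^ (2*ℓ)) with hT
  have hT2 : T ^ 2 = 1 + a ^ 2 := by
    rw [hT, Real.sq_sqrt (by positivity), harg]
  have hT0 : 0 ≤ T := Real.sqrt_nonneg _
  -- (1+a) ≤ √2 * T
  have hstep : 1 + a ≤ Real.sqrt 2 * T := by
    have h1 : (1 + a) ^ 2 ≤ 2 * (1 + a ^ 2) := by nlinarith [sq_nonneg (1 - a)]
    have h2' : 1 + a = Real.sqrt ((1 + a) ^ 2) := (Real.sqrt_sq (by positivity)).symm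
    rw [h2']
    calc Real.sqrt ((1 + a) ^ 2) ≤ Real.sqrt (2 * (1 + a ^ 2)) := Real.sqrt_le_sqrt h1
      _ = Real.sqrt 2 * Real.sqrt (1 + a ^ 2) := Real.sqrt_mul (by norm_num) _
      _ = Real.sqrt 2 * T := by rw [hT, harg]
  -- bound on s
  have hceq : L₂ ^ 2 / (32 * L₀ ^ 4) = (L₂ / (4 * Real.sqrt 2 * L₀ ^ 2)) ^ 2 := by
    rw [div_pow]
    have : (4 * Real.sqrt 2 * L₀ ^ 2) ^ 2 = 32 * L₀ ^ 4 := by nlinarith [h2sq]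
    rw [this]
  have h1s : s ≤ L₂ / (4 * Real.sqrt 2 * L₀ ^ 2) := by
    rw [hs]
    calc Real.sqrt δ ≤ Real.sqrt ((L₂ / (4 * Real.sqrt 2 * L₀ ^ 2)) ^ 2) :=
          Real.sqrt_le_sqrt (hceq ▸ hδ1)
      _ = L₂ / (4 * Real.sqrt 2 * L₀ ^ 2) := Real.sqrt_sq (by positivity)
  have hsle : 2 * L₀ ^ 2 * s ≤ L₂ / (2 * Real.sqrt 2) := by
    calc 2 * L₀ ^ 2 * s ≤ 2 * L₀ ^ 2 * (L₂ / (4 * Real.sqrt 2 * L₀ ^ 2)) :=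
          mul_le_mul_of_nonneg_left h1s (by positivity)
      _ = L₂ / (2 * Real.sqrt 2) := by field_simp; ring
  constructor
  · -- main inequality
    have hmain : L₂ / Real.sqrt 2 + L₂ / (2 * Real.sqrt 2) * ((1 + ‖x‖ ^ ℓ) * s)
        ≤ L₂ * T := by
      have h1 : (1 + ‖x‖ ^ ℓ) * s ≤ 2 * a := by
        rw [ha]; nlinarith [hs0.le]
      have h2'' : L₂ / Real.sqrt 2 + L₂ / (2 * Real.sqrt 2) * (2 * a) ≤ L₂ * T := by
        have hm : L₂ / Real.sqrt 2 * (1 + a) ≤ L₂ / Real.sqrt 2 * (Real.sqrt 2 * T) :=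
          mul_le_mul_of_nonneg_left hstep (by positivity)
        calc L₂ / Real.sqrt 2 + L₂ / (2 * Real.sqrt 2) * (2 * a)
            = L₂ / Real.sqrt 2 * (1 + a) := by field_simp
          _ ≤ L₂ / Real.sqrt 2 * (Real.sqrt 2 * T) := hm
          _ = L₂ * T := by field_simp
      linarith [mul_le_mul_of_nonneg_left h1
        (le_of_lt (by positivity : (0:ℝ) < L₂ / (2 * Real.sqrt 2)))]
    have hδeq : δ = s * s := by rw [← hs2]; ring
    have hexp : (L₂ / (2 * Real.sqrt 2) - 2 * L₀ ^ 2 * s) * (1 + ‖x‖ ^ ℓ) * s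
        = L₂ / (2 * Real.sqrt 2) * ((1 + ‖x‖ ^ ℓ) * s)
          - 2 * L₀ ^ 2 * (1 + ‖x‖ ^ ℓ) * (s * s) := by ring
    rw [hδeq, hexp]
    linarith
  · have hpos2 : 0 ≤ (L₂ / (2 * Real.sqrt 2) - 2 * L₀ ^ 2 * s) * (1 + ‖x‖ ^ ℓ) * s :=
      mul_nonneg (mul_nonneg (by linarith) (by linarith)) hs0.le
    have hpos1 : 0 < L₂ / Real.sqrt 2 := div_pos hL₂ h2
    linarith
end
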